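/- Weak flux continuity across any interface curve joining D to E: suppose the coefficient vectors (c⁻, c⁺) satisfy the flux jump condition (J3), and let F : ℝ² → ℝ² be the vector field F = β⁺∇p⁺ − β⁻∇p⁻, i.e. F(x,y) = (β⁺(c₂⁺ + 2c₄⁺x) − β⁻(c₂⁻ + 2c₄⁻x), β⁺(c₃⁺ − 2c₄⁺y) − β⁻(c₃⁻ − 2c₄⁻y)). Then for every continuously differentiable path γ = (γ₁, γ₂) : [0,1] → ℝ² with γ(0) = D and γ(1) = E, the flux of F across γ vanishes: ∫₀¹ F(γ(t)) · (γ₂′(t), −γ₁′(t)) dt = 0. (This expresses that the IFE function satisfies the flux jump condition weakly on the actual interface curve Γ ∩ T, not only on the segment DE.) -/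

import Mathlib

open MeasureTheory Set

noncomputable section

/-- The rotated-Q1 polynomial `c₁ + c₂ x + c₃ y + c₄ (x² − y²)` with coefficient
vector `c = (c 0, c 1, c 2, c 3)`. -/
def rq1 (c : Fin 4 → ℝ) (x y : ℝ) : ℝ :=
  c 0 + c 1 * x + c 2 * y + c 3 * (x ^ 2 - y ^ 2)

/-- The piecewise rotated-Q1 function on the reference Type II interface element:
`p⁻` where `x ≤ d + (e − d) y`, `p⁺` elsewhere. -/
def phiFn (d e : ℝ) (cm cp : Fin 4 → ℝ) (x y : ℝ) : ℝ :=
  if x ≤ d + (e - d) * y then rq1 cm x y else rq1 cp x y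

/-- Jump condition (J1): continuity at the interface points `D = (d,0)` and `E = (e,1)`. -/
def J1 (d e : ℝ) (cm cp : Fin 4 → ℝ) : Prop :=
  rq1 cm d 0 = rq1 cp d 0 ∧ rq1 cm e 1 = rq1 cp e 1

/-- Jump condition (J2): matching of the `x² − y²` coefficients. -/
def J2 (cm cp : Fin 4 → ℝ) : Prop := cm 3 = cp 3

/-- The flux defect `∫₀¹ (β⁺∇p⁺ − β⁻∇p⁻)((1−t)d + te, t) · (1, d − e) dt`. -/
def fluxDefect (βm βp d e : ℝ) (cm cp : Fin 4 → ℝ) : ℝ :=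
  ∫ t in (0:ℝ)..1,
    ((βp * (cp 1 + 2 * cp 3 * ((1 - t) * d + t * e))
        - βm * (cm 1 + 2 * cm 3 * ((1 - t) * d + t * e))) * 1
      + (βp * (cp 2 - 2 * cp 3 * t) - βm * (cm 2 - 2 * cm 3 * t)) * (d - e))

/-- Jump condition (J3): the integral over `DE` of the jump of the normal flux vanishes. -/
def J3 (βm βp d e : ℝ) (cm cp : Fin 4 → ℝ) : Prop :=
  fluxDefect βm βp d e cm cp = 0

/-- The four edge-mean (integral-value) degrees of freedom of `φ`:
bottom, right, top, left edges of `T = [0,1]²`. -/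
def dofI (d e : ℝ) (cm cp : Fin 4 → ℝ) : Fin 4 → ℝ :=
  ![(∫ x in (0:ℝ)..d, rq1 cm x 0) + ∫ x in d..(1:ℝ), rq1 cp x 0,
    ∫ y in (0:ℝ)..1, rq1 cp 1 y,
    (∫ x in (0:ℝ)..e, rq1 cm x 1) + ∫ x in e..(1:ℝ), rq1 cp x 1,
    ∫ y in (0:ℝ)..1, rq1 cm 0 y]

/-- The four midpoint-value degrees of freedom of `φ`:
values at the midpoints of the bottom, right, top, left edges of `T = [0,1]²`. -/
def dofP (d e : ℝ) (cm cp : Fin 4 → ℝ) : Fin 4 → ℝ :=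
  ![phiFn d e cm cp (1/2) 0, phiFn d e cm cp 1 (1/2),
    phiFn d e cm cp (1/2) 1, phiFn d e cm cp 0 (1/2)]

/-- The partial derivative `∂ₓᵃ∂ᵧᵇ` of the rotated-Q1 polynomial with coefficients `c`. -/
def rq1D (c : Fin 4 → ℝ) : ℕ → ℕ → ℝ → ℝ → ℝ
  | 0, 0, x, y => rq1 c x y
  | 1, 0, x, _ => c 1 + 2 * c 3 * x
  | 0, 1, _, y => c 2 - 2 * c 3 * y
  | 2, 0, _, _ => 2 * c 3
  | 1, 1, _, _ => 0
  | 0, 2, _, _ => -(2 * c 3)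
  | _, _, _, _ => 0

/-- The jump vector field `F = β⁺∇p⁺ − β⁻∇p⁻`. -/
def fluxField (βm βp : ℝ) (cm cp : Fin 4 → ℝ) (x y : ℝ) : ℝ × ℝ :=
  (βp * (cp 1 + 2 * cp 3 * x) - βm * (cm 1 + 2 * cm 3 * x),
   βp * (cp 2 - 2 * cp 3 * y) - βm * (cm 2 - 2 * cm 3 * y))


/-- Fundamental theorem for the flux form of the affine divergence-free field
`(A + Bx, C - By)` along a C¹ path. -/
theorem flux_ftc (A B C : ℝ) (γ₁ γ₂ g₁ g₂ : ℝ → ℝ)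
    (hγ₁ : ∀ t ∈ Icc (0:ℝ) 1, HasDerivAt γ₁ (g₁ t) t)
    (hγ₂ : ∀ t ∈ Icc (0:ℝ) 1, HasDerivAt γ₂ (g₂ t) t)
    (hg₁ : ContinuousOn g₁ (Icc (0:ℝ) 1)) (hg₂ : ContinuousOn g₂ (Icc (0:ℝ) 1)) :
    ∫ t in (0:ℝ)..1, ((A + B * γ₁ t) * g₂ t - (C - B * γ₂ t) * g₁ t)
      = (-(C * γ₁ 1) + B * γ₁ 1 * γ₂ 1 + A * γ₂ 1)
        - (-(C * γ₁ 0) + B * γ₁ 0 * γ₂ 0 + A * γ₂ 0) := by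
  have huIcc : uIcc (0:ℝ) 1 = Icc 0 1 := uIcc_of_le zero_le_one
  have hcγ₁ : ContinuousOn γ₁ (Icc (0:ℝ) 1) := fun t ht =>
    (hγ₁ t ht).continuousAt.continuousWithinAt
  have hcγ₂ : ContinuousOn γ₂ (Icc (0:ℝ) 1) := fun t ht =>
    (hγ₂ t ht).continuousAt.continuousWithinAt
  refine intervalIntegral.integral_eq_sub_of_hasDerivAt
    (f := fun t => -(C * γ₁ t) + B * γ₁ t * γ₂ t + A * γ₂ t) ?_ ?_
  · intro t ht
    rw [huIcc] at ht
    have h1 := hγ₁ t ht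
    have h2 := hγ₂ t ht
    have hd : HasDerivAt (fun t => -(C * γ₁ t) + B * γ₁ t * γ₂ t + A * γ₂ t)
        (-(C * g₁ t) + B * (g₁ t * γ₂ t + γ₁ t * g₂ t) + A * g₂ t) t := by
      simpa only [mul_assoc, Pi.add_def, Pi.neg_def, Pi.mul_apply] using (((h1.const_mul C).neg.add
        (((h1.mul h2).const_mul B))).add (h2.const_mul A))
    refine hd.congr_deriv ?_
    ring
  · apply ContinuousOn.intervalIntegrable
    rw [huIcc]
    exact (((continuousOn_const.add (continuousOn_const.mul hcγ₁)).mul hg₂).sub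
      ((continuousOn_const.sub (continuousOn_const.mul hcγ₂)).mul hg₁))

/-- The flux defect equals the stream-function difference between `E` and `D`. -/
theorem fluxDefect_eval (βm βp d e : ℝ) (cm cp : Fin 4 → ℝ) :
    fluxDefect βm βp d e cm cp
      = ((βp * cp 1 - βm * cm 1) + 2 * (βp * cp 3 - βm * cm 3) * e
          + (βp * cp 2 - βm * cm 2) * (d - e)) := by
  set A := βp * cp 1 - βm * cm 1 with hA
  set B := 2 * (βp * cp 3 - βm * cm 3) with hB
  set C := βp * cp 2 - βm * cm 2 with hC
  have hline : ∀ t ∈ Icc (0:ℝ) 1,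
      HasDerivAt (fun t : ℝ => (1 - t) * d + t * e) (e - d) t := by
    intro t _
    have h := (((hasDerivAt_const t (1:ℝ)).sub (hasDerivAt_id t)).mul_const d).add
      ((hasDerivAt_id t).mul_const e)
    refine h.congr_deriv ?_
    ring
  have key := flux_ftc A B C (fun t => (1 - t) * d + t * e) id
    (fun _ => e - d) (fun _ => 1) hline (fun t _ => hasDerivAt_id t)
    continuousOn_const continuousOn_const
  have heq : fluxDefect βm βp d e cm cp
      = ∫ t in (0:ℝ)..1,
          ((A + B * ((1 - t) * d + t * e)) * 1 - (C - B * (id t)) * (e - d)) := by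
    unfold fluxDefect
    apply intervalIntegral.integral_congr
    intro t _
    simp only [hA, hB, hC, id]
    ring
  rw [heq, key]
  simp only [id]
  ring

/-- Weak flux continuity across any C¹ interface curve joining
`D = (d,0)` to `E = (e,1)`: if (J3) holds, the flux of `F = β⁺∇p⁺ − β⁻∇p⁻` across
every continuously differentiable path from `D` to `E` vanishes. -/
theorem ife_weak_flux_continuity
    (βm βp : ℝ) (hβm : 0 < βm) (hβp : 0 < βp)
    (d e : ℝ) (hd : d ∈ Ioo (0:ℝ) 1) (he : e ∈ Ioo (0:ℝ) 1)
    (cm cp : Fin 4 → ℝ) (h3 : J3 βm βp d e cm cp)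
    (γ₁ γ₂ g₁ g₂ : ℝ → ℝ)
    (hγ₁ : ∀ t ∈ Icc (0:ℝ) 1, HasDerivAt γ₁ (g₁ t) t)
    (hγ₂ : ∀ t ∈ Icc (0:ℝ) 1, HasDerivAt γ₂ (g₂ t) t)
    (hg₁ : ContinuousOn g₁ (Icc (0:ℝ) 1)) (hg₂ : ContinuousOn g₂ (Icc (0:ℝ) 1))
    (hD : γ₁ 0 = d ∧ γ₂ 0 = 0) (hE : γ₁ 1 = e ∧ γ₂ 1 = 1) :
    ∫ t in (0:ℝ)..1,
        ((fluxField βm βp cm cp (γ₁ t) (γ₂ t)).1 * g₂ t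
          - (fluxField βm βp cm cp (γ₁ t) (γ₂ t)).2 * g₁ t) = 0 := by
  set A := βp * cp 1 - βm * cm 1 with hA
  set B := 2 * (βp * cp 3 - βm * cm 3) with hB
  set C := βp * cp 2 - βm * cm 2 with hC
  have key := flux_ftc A B C γ₁ γ₂ g₁ g₂ hγ₁ hγ₂ hg₁ hg₂
  have heq : ∫ t in (0:ℝ)..1,
        ((fluxField βm βp cm cp (γ₁ t) (γ₂ t)).1 * g₂ t
          - (fluxField βm βp cm cp (γ₁ t) (γ₂ t)).2 * g₁ t)
      = ∫ t in (0:ℝ)..1, ((A + B * γ₁ t) * g₂ t - (C - B * γ₂ t) * g₁ t) := by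
    apply intervalIntegral.integral_congr
    intro t _
    simp only [fluxField, hA, hB, hC]
    ring
  have hval := fluxDefect_eval βm βp d e cm cp
  rw [h3] at hval
  rw [heq, key, hD.1, hD.2, hE.1, hE.2]
  simp only [hA, hB, hC] at hval ⊢
  linarith [hval.symm]


end
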